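/- Let n ≥ 3, let V be an n-dimensional real vector space with a positive definite symmetric bilinear form g, let H be a symmetric bilinear form on V whose g-associated endomorphism has exactly three distinct eigenvalues λ₀, λ₁, λ₂ of multiplicities 1, n₁, n₂ (the principal curvatures of a hypersurface in a Riemannian space form N^{n+1}(c)), let c ∈ ℝ, and let R = (1/2)·H∧H + (c/2)·g∧g (the Gauss equation), S = Ric(R). Set α = λ₀+λ₁+λ₂, β = −λ₀(λ₁+λ₂) − λ₁λ₂, γ = λ₀λ₁λ₂, A = S² + ((α − tr(H))² + β − 2(n−1)c)·S + ((n−1)²c² − (β + (α − tr(H))²)(n−1)c − γ(α − 2·tr(H)))·g, and μ = γ + (α − tr(H))(β + tr(H)(α − tr(H))). Then A = μ·H, and μ = (λ₀ + (n₁−1)λ₁ + (n₂−1)λ₂)·(λ₁λ₂ + (n₁λ₁ + n₂λ₂)((n₁−1)λ₁ + (n₂−1)λ₂)). Moreover: (i) if μ = 0 then S² is a linear combination of S and g (partially Einstein point); (ii) if μ ≠ 0 then R = (1/(2μ²))·A∧A + (c/2)·g∧g. -/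

import Mathlib

namespace OVAff

variable {V : Type*} [AddCommGroup V] [Module ℝ V]

/-- Kulkarni–Nomizu product of two (0,2)-tensors. -/
noncomputable def KN (E F : V → V → ℝ) : V → V → V → V → ℝ := fun X₁ X₂ X₃ X₄ =>
  E X₁ X₄ * F X₂ X₃ + E X₂ X₃ * F X₁ X₄ - E X₁ X₃ * F X₂ X₄ - E X₂ X₄ * F X₁ X₃

/-- Kulkarni–Nomizu product of a (0,2)-tensor with a (0,4)-tensor. -/
noncomputable def KN4 (E : V → V → ℝ) (T : V → V → V → V → ℝ) :
    V → V → V → V → V → V → ℝ := fun X₁ X₂ X₃ X₄ Y₁ Y₂ =>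
  E X₁ X₄ * T X₂ X₃ Y₁ Y₂ + E X₂ X₃ * T X₁ X₄ Y₁ Y₂
    - E X₁ X₃ * T X₂ X₄ Y₁ Y₂ - E X₂ X₄ * T X₁ X₃ Y₁ Y₂

/-- (X ∧_A Y) Z = A(Y,Z) X − A(X,Z) Y. -/
noncomputable def wedgeVec (A : V → V → ℝ) (X Y Z : V) : V := A Y Z • X - A X Z • Y

/-- Tachibana operator Q(A,T) on a (0,2)-tensor T. -/
noncomputable def Q2 (A T : V → V → ℝ) : V → V → V → V → ℝ :=
  fun X₁ X₂ X Y => -(T (wedgeVec A X Y X₁) X₂ + T X₁ (wedgeVec A X Y X₂))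

/-- Tachibana operator Q(A,T) on a (0,4)-tensor T. -/
noncomputable def Q4 (A : V → V → ℝ) (T : V → V → V → V → ℝ) :
    V → V → V → V → V → V → ℝ := fun X₁ X₂ X₃ X₄ X Y =>
  -(T (wedgeVec A X Y X₁) X₂ X₃ X₄ + T X₁ (wedgeVec A X Y X₂) X₃ X₄
    + T X₁ X₂ (wedgeVec A X Y X₃) X₄ + T X₁ X₂ X₃ (wedgeVec A X Y X₄))

/-- The derivation B·T of a curvature operator family ℬ (with h(ℬ(X,Y)Z,W)=B(X,Y,Z,W))
acting on a (0,2)-tensor T. -/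
noncomputable def dot2 (ℬ : V → V → V → V) (T : V → V → ℝ) : V → V → V → V → ℝ :=
  fun X₁ X₂ X Y => -(T (ℬ X Y X₁) X₂ + T X₁ (ℬ X Y X₂))

/-- The derivation B·T acting on a (0,4)-tensor T. -/
noncomputable def dot4 (ℬ : V → V → V → V) (T : V → V → V → V → ℝ) :
    V → V → V → V → V → V → ℝ := fun X₁ X₂ X₃ X₄ X Y =>
  -(T (ℬ X Y X₁) X₂ X₃ X₄ + T X₁ (ℬ X Y X₂) X₃ X₄
    + T X₁ X₂ (ℬ X Y X₃) X₄ + T X₁ X₂ X₃ (ℬ X Y X₄))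

/-- Ricci contraction of a (0,4)-tensor with respect to an h-orthonormal basis `e`
with signs `ε`. -/
noncomputable def ricci {n : ℕ} (ε : Fin n → ℝ) (e : Fin n → V)
    (B : V → V → V → V → ℝ) : V → V → ℝ :=
  fun X Y => ∑ j, ε j * B (e j) X Y (e j)

/-- Scalar curvature of a (0,4)-tensor. -/
noncomputable def scal {n : ℕ} (ε : Fin n → ℝ) (e : Fin n → V)
    (B : V → V → V → V → ℝ) : ℝ :=
  ∑ j, ε j * ricci ε e B (e j) (e j)

/-- Weyl tensor of a (0,4)-tensor with respect to the metric h. -/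
noncomputable def weyl {n : ℕ} (h : V → V → ℝ) (ε : Fin n → ℝ) (e : Fin n → V)
    (B : V → V → V → V → ℝ) : V → V → V → V → ℝ := fun X₁ X₂ X₃ X₄ =>
  B X₁ X₂ X₃ X₄ - (1 / ((n : ℝ) - 2)) * KN h (ricci ε e B) X₁ X₂ X₃ X₄
    + (scal ε e B / (2 * ((n : ℝ) - 2) * ((n : ℝ) - 1))) * KN h h X₁ X₂ X₃ X₄


/-- hypersurface of a Riemannian space form N^{n+1}(c) with three distinct
principal curvatures λ₀, λ₁, λ₂ of multiplicities 1, n₁, n₂ (Gauss equation pointwise). -/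
theorem statement13
    {V : Type*} [AddCommGroup V] [Module ℝ V]
    (n : ℕ) (hn : 3 ≤ n)
    (g : LinearMap.BilinForm ℝ V)
    (hsymm : ∀ X Y, g X Y = g Y X)
    (hpos : ∀ X : V, X ≠ 0 → 0 < g X X)
    [FiniteDimensional ℝ V] (hdim : Module.finrank ℝ V = n)
    (e : Module.Basis (Fin n) ℝ V)
    (he : ∀ j k, g (e j) (e k) = if j = k then (1 : ℝ) else 0)
    (ℋ : V →ₗ[ℝ] V) (hsa : ∀ X Y, g (ℋ X) Y = g X (ℋ Y))
    (H : V → V → ℝ) (hH : H = fun X Y => g (ℋ X) Y)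
    (l₀ l₁ l₂ : ℝ) (h01 : l₀ ≠ l₁) (h02 : l₀ ≠ l₂) (h12 : l₁ ≠ l₂)
    (n₁ n₂ : ℕ) (hsum : 1 + n₁ + n₂ = n)
    (heig : ∀ t : ℝ, Module.End.HasEigenvalue ℋ t ↔ t = l₀ ∨ t = l₁ ∨ t = l₂)
    (hm₀ : Module.finrank ℝ ↥(Module.End.eigenspace ℋ l₀) = 1)
    (hm₁ : Module.finrank ℝ ↥(Module.End.eigenspace ℋ l₁) = n₁)
    (hm₂ : Module.finrank ℝ ↥(Module.End.eigenspace ℋ l₂) = n₂)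
    (c : ℝ)
    (R : V → V → V → V → ℝ)
    (hR : R = fun X₁ X₂ X₃ X₄ => (1 / 2 : ℝ) * KN H H X₁ X₂ X₃ X₄
      + (c / 2) * KN (fun X Y => g X Y) (fun X Y => g X Y) X₁ X₂ X₃ X₄)
    (S : V → V → ℝ) (hSdef : S = ricci (fun _ => (1 : ℝ)) (⇑e) R)
    (𝒟 : V →ₗ[ℝ] V) (h𝒟 : ∀ X Y, g (𝒟 X) Y = S X Y)
    (α β γ : ℝ)
    (hα : α = l₀ + l₁ + l₂)
    (hβ : β = -(l₀ * (l₁ + l₂)) - l₁ * l₂)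
    (hγ : γ = l₀ * l₁ * l₂)
    (A : V → V → ℝ)
    (hA : A = fun X Y => S (𝒟 X) Y
      + ((α - LinearMap.trace ℝ V ℋ) ^ 2 + β - 2 * ((n : ℝ) - 1) * c) * S X Y
      + (((n : ℝ) - 1) ^ 2 * c ^ 2
          - (β + (α - LinearMap.trace ℝ V ℋ) ^ 2) * ((n : ℝ) - 1) * c
          - γ * (α - 2 * LinearMap.trace ℝ V ℋ)) * g X Y)
    (μ : ℝ)
    (hμ : μ = γ + (α - LinearMap.trace ℝ V ℋ)
      * (β + LinearMap.trace ℝ V ℋ * (α - LinearMap.trace ℝ V ℋ))) :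
    (∀ X Y, A X Y = μ * H X Y) ∧
    (μ = (l₀ + ((n₁ : ℝ) - 1) * l₁ + ((n₂ : ℝ) - 1) * l₂)
      * (l₁ * l₂ + ((n₁ : ℝ) * l₁ + (n₂ : ℝ) * l₂)
          * (((n₁ : ℝ) - 1) * l₁ + ((n₂ : ℝ) - 1) * l₂))) ∧
    (μ = 0 → ∃ ρ₁ ρ₂ : ℝ, ∀ X Y, S (𝒟 X) Y = ρ₁ * S X Y + ρ₂ * g X Y) ∧
    (μ ≠ 0 → ∀ X₁ X₂ X₃ X₄,
      R X₁ X₂ X₃ X₄ = (1 / (2 * μ ^ 2)) * KN A A X₁ X₂ X₃ X₄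
        + (c / 2) * KN (fun X Y => g X Y) (fun X Y => g X Y) X₁ X₂ X₃ X₄) := by

  classical
  -- nondegeneracy of g
  have hnd : ∀ Z : V, (∀ Y, g Z Y = 0) → Z = 0 := by
    intro Z hZ
    by_contra h
    exact absurd (hZ Z) (ne_of_gt (hpos Z h))
  -- orthonormal expansion lemmas
  have hrep : ∀ (W : V) (j : Fin n), e.repr W j = g W (e j) := by
    intro W j
    conv_rhs => rw [← e.sum_repr W]
    rw [map_sum, LinearMap.sum_apply]
    simp [he, Finset.sum_ite_eq']
  have hexp : ∀ W Y : V, (∑ j, g W (e j) * g (e j) Y) = g W Y := by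
    intro W Y
    conv_rhs => rw [← e.sum_repr W]
    rw [map_sum, LinearMap.sum_apply]
    refine Finset.sum_congr rfl fun j _ => ?_
    rw [map_smul, LinearMap.smul_apply, smul_eq_mul, hrep]
  have htrsum : LinearMap.trace ℝ V ℋ = ∑ j, g (ℋ (e j)) (e j) := by
    rw [LinearMap.trace_eq_matrix_trace ℝ e ℋ, Matrix.trace]
    refine Finset.sum_congr rfl fun j _ => ?_
    rw [Matrix.diag_apply, LinearMap.toMatrix_apply, hrep]
  -- explicit formula for S
  have hSf : ∀ X Y, S X Y = LinearMap.trace ℝ V ℋ * g (ℋ X) Y - g (ℋ (ℋ X)) Y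
      + ((n : ℝ) - 1) * c * g X Y := by
    intro X Y
    rw [hSdef]
    unfold ricci
    calc (∑ j, (1:ℝ) * R (e j) X Y (e j))
        = ∑ j, (g (ℋ X) Y * g (ℋ (e j)) (e j) - g (ℋ X) (e j) * g (ℋ (e j)) Y
            + c * (g X Y * g (e j) (e j) - g X (e j) * g (e j) Y)) := by
          refine Finset.sum_congr rfl fun j _ => ?_
          simp only [hR, hH, KN, one_mul]
          ring
      _ = g (ℋ X) Y * (∑ j, g (ℋ (e j)) (e j)) - (∑ j, g (ℋ X) (e j) * g (ℋ (e j)) Y)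
            + c * (g X Y * (∑ j, g (e j) (e j)) - ∑ j, g X (e j) * g (e j) Y) := by
          rw [Finset.sum_add_distrib, Finset.sum_sub_distrib, ← Finset.mul_sum, ← Finset.mul_sum]
          congr 1
          rw [Finset.sum_sub_distrib, ← Finset.mul_sum]
      _ = LinearMap.trace ℝ V ℋ * g (ℋ X) Y - g (ℋ (ℋ X)) Y + ((n : ℝ) - 1) * c * g X Y := by
          rw [← htrsum]
          have h2 : (∑ j, g (ℋ X) (e j) * g (ℋ (e j)) Y) = g (ℋ (ℋ X)) Y := by
            have : ∀ j : Fin n, g (ℋ (e j)) Y = g (e j) (ℋ Y) := fun j => hsa _ _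
            simp_rw [this, hexp (ℋ X) (ℋ Y)]
            exact (hsa _ _).symm
          have h3 : (∑ j : Fin n, g (e j) (e j)) = (n : ℝ) := by simp [he]
          rw [h2, h3, hexp X Y]
          ring
  -- spectral theory: inner product structure
  letI core : InnerProductSpace.Core ℝ V :=
    { inner := fun X Y => g X Y
      conj_inner_symm := fun X Y => by simpa using hsymm Y X
      re_inner_nonneg := fun X => by
        rcases eq_or_ne X 0 with h | h
        · simp [h]
        · exact le_of_lt (by simpa using hpos X h)
      add_left := fun X Y Z => by simp
      smul_left := fun X Y r => by simp
      definite := fun X hX => by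
        by_contra h
        exact absurd hX (ne_of_gt (hpos X h)) }
  letI : NormedAddCommGroup V := core.toNormedAddCommGroup
  letI : InnerProductSpace ℝ V := InnerProductSpace.ofCore core.toCore
  have hsym : LinearMap.IsSymmetric ℋ := fun X Y => hsa X Y
  have hTop : (⨆ μ' : ℝ, Module.End.eigenspace ℋ μ') = ⊤ :=
    Submodule.orthogonal_eq_bot_iff.mp hsym.orthogonalComplement_iSup_eigenspaces_eq_bot
  have hIntAll : DirectSum.IsInternal (fun μ' : ℝ => Module.End.eigenspace ℋ μ') :=
    DirectSum.isInternal_ne_bot_iff.mp hsym.direct_sum_isInternal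
  have hmapsTo : ∀ μ' : ℝ,
      Set.MapsTo ℋ (Module.End.eigenspace ℋ μ') (Module.End.eigenspace ℋ μ') := by
    intro μ' v hv
    rw [SetLike.mem_coe] at hv ⊢
    rw [Module.End.mem_eigenspace_iff.mp hv]
    exact Submodule.smul_mem _ _ hv
  have hfin : {μ' : ℝ | Module.End.eigenspace ℋ μ' ≠ ⊥}.Finite := by
    apply Set.Finite.subset (((Set.finite_singleton l₂).insert l₁).insert l₀)
    intro μ' hμ'
    have := (heig μ').mp hμ'
    simpa using this
  -- the trace equals the sum of the eigenvalues with multiplicities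
  have htrval : LinearMap.trace ℝ V ℋ = l₀ + (n₁ : ℝ) * l₁ + (n₂ : ℝ) * l₂ := by
    have htr2 := LinearMap.trace_eq_sum_trace_restrict' hIntAll hfin hmapsTo
    have hto : hfin.toFinset = {l₀, l₁, l₂} := by
      ext μ'
      simp only [Set.Finite.mem_toFinset, Set.mem_setOf_eq, Finset.mem_insert,
        Finset.mem_singleton]
      exact heig μ'
    have hres : ∀ lx : ℝ,
        LinearMap.trace ℝ _ (ℋ.restrict (hmapsTo lx))
          = lx * (Module.finrank ℝ (Module.End.eigenspace ℋ lx) : ℝ) := by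
      intro lx
      have hid : ℋ.restrict (hmapsTo lx) = lx • LinearMap.id := by
        ext v
        have hv := Module.End.mem_eigenspace_iff.mp v.2
        simp [LinearMap.restrict_apply, hv]
        exact hv
      rw [hid, LinearMap.map_smul, LinearMap.trace_id, smul_eq_mul]
    rw [htr2, hto]
    rw [Finset.sum_insert (by simp [h01, h02]), Finset.sum_insert (by simp [h12]),
      Finset.sum_singleton, hres, hres, hres, hm₀, hm₁, hm₂]
    push_cast
    ring
  -- the cubic minimal polynomial annihilates ℋ
  have hcube : ((ℋ - l₀ • 1) * (ℋ - l₁ • 1) * (ℋ - l₂ • 1) : Module.End ℝ V) = 0 := by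
    ext v
    have hv : v ∈ (⨆ μ' : ℝ, Module.End.eigenspace ℋ μ') := hTop ▸ Submodule.mem_top
    rw [LinearMap.zero_apply]
    refine Submodule.iSup_induction _ (motive := fun w =>
      ((ℋ - l₀ • 1) * (ℋ - l₁ • 1) * (ℋ - l₂ • 1)) w = 0) hv ?_ (by simp) ?_
    · intro μ' w hw
      rcases eq_or_ne w 0 with rfl | hw0
      · simp
      · have hμ' : μ' = l₀ ∨ μ' = l₁ ∨ μ' = l₂ :=
          (heig μ').mp (Module.End.hasEigenvalue_of_hasEigenvector ⟨hw, hw0⟩)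
        have hℋw : ℋ w = μ' • w := Module.End.mem_eigenspace_iff.mp hw
        have key : ∀ a r : ℝ, (ℋ - a • 1) (r • w) = (r * (μ' - a)) • w := by
          intro a r
          simp only [LinearMap.sub_apply, map_smul, hℋw, LinearMap.smul_apply,
            Module.End.one_apply]
          module
        have k2 : (ℋ - l₂ • 1) w = (1 * (μ' - l₂)) • w := by
          simpa using key l₂ 1
        rw [Module.End.mul_apply, Module.End.mul_apply, k2, key, key]
        rcases hμ' with rfl | rfl | rfl <;> simp
    · intro x y hx hy
      simp [map_add, hx, hy]
  -- abbreviations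
  set t := LinearMap.trace ℝ V ℋ with ht
  set e' := ((n : ℝ) - 1) * c with he'
  -- identify 𝒟 with a polynomial in ℋ
  have h𝒟eq : 𝒟 = t • ℋ - ℋ ^ 2 + e' • (1 : Module.End ℝ V) := by
    apply LinearMap.ext; intro X
    have h0 : ∀ Y, g (𝒟 X - (t • ℋ - ℋ ^ 2 + e' • (1 : Module.End ℝ V)) X) Y
        = 0 := by
      intro Y
      rw [map_sub, LinearMap.sub_apply, h𝒟, hSf]
      simp only [LinearMap.add_apply, LinearMap.sub_apply, LinearMap.smul_apply,
        Module.End.one_apply, pow_two, Module.End.mul_apply, map_add, map_sub, map_smul,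
        smul_eq_mul]
      ring
    exact sub_eq_zero.mp (hnd _ h0)
  set p := (α - t) ^ 2 + β - 2 * ((n : ℝ) - 1) * c with hp
  set q := ((n : ℝ) - 1) ^ 2 * c ^ 2 - (β + (α - t) ^ 2) * ((n : ℝ) - 1) * c
    - γ * (α - 2 * t) with hq
  -- the key operator identity
  have hop : 𝒟 ^ 2 + p • 𝒟 + q • (1 : Module.End ℝ V) = μ • ℋ := by
    have hfac2 : (Polynomial.C t * Polynomial.X - Polynomial.X ^ 2
          + Polynomial.C e') ^ 2
        + Polynomial.C p * (Polynomial.C t * Polynomial.X - Polynomial.X ^ 2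
          + Polynomial.C e')
        + Polynomial.C q
        = ((Polynomial.X - Polynomial.C l₀) * (Polynomial.X - Polynomial.C l₁)
            * (Polynomial.X - Polynomial.C l₂)) * (Polynomial.X + Polynomial.C (α - 2 * t))
          + Polynomial.C μ * Polynomial.X := by
      rw [hp, hq, he', hμ, hα, hβ, hγ]
      simp only [map_add, map_sub, map_mul, map_pow, map_neg, map_one, map_ofNat]
      ring
    have h2 := congrArg (Polynomial.aeval ℋ) hfac2
    simp only [map_add, map_sub, map_mul, map_pow, Polynomial.aeval_X, Polynomial.aeval_C,
      Algebra.algebraMap_eq_smul_one, smul_mul_assoc, one_mul] at h2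
    rw [hcube, zero_mul, zero_add] at h2
    rw [h𝒟eq]
    exact h2
  -- Part 1 : A = μ H
  have part1 : ∀ X Y, A X Y = μ * H X Y := by
    intro X Y
    have hop' := congrArg (fun L : Module.End ℝ V => g (L X) Y) hop
    simp only [LinearMap.add_apply, LinearMap.smul_apply, Module.End.one_apply, pow_two,
      Module.End.mul_apply, map_add, map_smul, smul_eq_mul] at hop'
    simp only [hA, hH, ← h𝒟]
    exact hop'
  refine ⟨part1, ?_, ?_, ?_⟩
  -- Part 2 : the value of μ
  · rw [hμ, hα, hβ, hγ, htrval]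
    ring
  -- Part 3 : partially Einstein
  · intro hμ0
    refine ⟨-p, -q, fun X Y => ?_⟩
    have h1 := part1 X Y
    rw [hμ0, zero_mul] at h1
    simp only [hA] at h1
    linarith [h1]
  -- Part 4 : recovering R from A
  · intro hμ0 X₁ X₂ X₃ X₄
    have hKN : KN A A X₁ X₂ X₃ X₄ = μ ^ 2 * KN H H X₁ X₂ X₃ X₄ := by
      simp only [KN, part1]
      ring
    rw [hR, hKN]
    have h2 : (1 / (2 * μ ^ 2)) * (μ ^ 2 * KN H H X₁ X₂ X₃ X₄)
        = (1 / 2 : ℝ) * KN H H X₁ X₂ X₃ X₄ := by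
      field_simp
    rw [h2]


end OVAff
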